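/- arXiv:1207.5722 — 2 statements merged into one kernel-verified Lean document; each statement's English description precedes it below -/
import Mathlib

section
/- Let G=(V,E) be a connected undirected graph and T ⊆ V of even cardinality. Let x* : E → ℝ satisfy x* ≥ 0 and x*(δ(S)) ≥ 2 for every T-even set S with ∅ ⊊ S ⊊ V. Let J be a spanning tree of G, let D be the set of wrong-degree nodes of J with respect to T, and let α, β ≥ 0 with α + 2β ≥ 1. Then (α·χ(J) + β·x*)(δ(U)) ≥ 1 holds for every set U with ∅ ⊊ U ⊊ V such that either (i) U is T-even, or (ii) U is T-odd and D-odd and x*(δ(U)) ≥ (1−2α)/β (with β > 0 in case (ii)). -/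
open Finset
open scoped Classical

variable {V : Type*}

/-- `x(δ(U))`: the total `x`-value of the edges of `G` with exactly one endpoint in `U`. -/
noncomputable def xCut [Fintype V] [DecidableEq V] (G : SimpleGraph V)
    (x : Sym2 V → ℝ) (U : Finset V) : ℝ :=
  ∑ u ∈ U, ∑ w ∈ Uᶜ, if G.Adj u w then x s(u, w) else 0

/-- The degree of a vertex `v` in a simple graph `J`. -/
noncomputable def treeDeg (J : SimpleGraph V) (v : V) : ℕ :=
  Nat.card {w // J.Adj v w}


lemma even_sym_sum [DecidableEq V] (f : V → V → ℕ) (hsymm : ∀ u w, f u w = f w u)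
    (hdiag : ∀ u, f u u = 0) (s : Finset V) :
    Even (∑ u ∈ s, ∑ w ∈ s, f u w) := by
  induction s using Finset.induction with
  | empty => simp
  | @insert a s ha ih =>
    rw [Finset.sum_insert ha, Finset.sum_insert ha]
    have h1 : ∑ u ∈ s, ∑ w ∈ insert a s, f u w
        = ∑ u ∈ s, f u a + ∑ u ∈ s, ∑ w ∈ s, f u w := by
      rw [← Finset.sum_add_distrib]
      exact Finset.sum_congr rfl fun u hu => Finset.sum_insert ha
    have h2 : ∑ u ∈ s, f u a = ∑ w ∈ s, f a w :=
      Finset.sum_congr rfl fun u _ => hsymm u a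
    rw [h1, hdiag, h2]
    obtain ⟨k, hk⟩ := ih
    exact ⟨∑ w ∈ s, f a w + k, by omega⟩

lemma zmod2_even {n : ℕ} (h : Even n) : (n : ZMod 2) = 0 := by
  rw [ZMod.natCast_eq_zero_iff]; exact even_iff_two_dvd.mp h

lemma zmod2_odd {n : ℕ} (h : Odd n) : (n : ZMod 2) = 1 := by
  obtain ⟨k, hk⟩ := h; subst hk; push_cast
  have : (2 : ZMod 2) = 0 := by decide
  rw [this]; ring

lemma zmod2_even_of_cast {n : ℕ} (h : (n : ZMod 2) = 0) : Even n := by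
  rw [ZMod.natCast_eq_zero_iff] at h; exact even_iff_two_dvd.mpr h


lemma treeDeg_eq [Fintype V] (J : SimpleGraph V) (v : V) :
    treeDeg J v = ∑ w ∈ univ, if J.Adj v w then 1 else 0 := by
  rw [treeDeg, Nat.card_eq_fintype_card, Fintype.card_subtype, Finset.card_filter]


theorem stmt7 {V : Type*} [Fintype V] [DecidableEq V]
    (G : SimpleGraph V) (hG : G.Connected)
    (T : Finset V) (hTeven : Even T.card)
    (x : Sym2 V → ℝ) (hx0 : ∀ e ∈ G.edgeSet, 0 ≤ x e)
    (heven : ∀ S : Finset V, S.Nonempty → S ≠ univ → Even ((S ∩ T).card) →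
      2 ≤ xCut G x S)
    (J : SimpleGraph V) (hJG : J ≤ G) (hJtree : J.IsTree)
    (D : Finset V)
    (hD : ∀ v, v ∈ D ↔ ((v ∈ T ∧ Even (treeDeg J v)) ∨ (v ∉ T ∧ Odd (treeDeg J v))))
    (α β : ℝ) (hα : 0 ≤ α) (hβ : 0 ≤ β) (hαβ : 1 ≤ α + 2 * β)
    (U : Finset V) (hU1 : U.Nonempty) (hU2 : U ≠ univ)
    (hcase : Even ((U ∩ T).card) ∨
      (Odd ((U ∩ T).card) ∧ Odd ((U ∩ D).card) ∧ 0 < β ∧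
        (1 - 2 * α) / β ≤ xCut G x U)) :
    1 ≤ xCut G (fun e => α * (if e ∈ J.edgeSet then 1 else 0) + β * x e) U := by
  set cutN : ℕ := ∑ u ∈ U, ∑ w ∈ Uᶜ, if J.Adj u w then 1 else 0 with hcutN
  -- splitting the cut value
  have hsplit : xCut G (fun e => α * (if e ∈ J.edgeSet then 1 else 0) + β * x e) U
      = α * (cutN : ℝ) + β * xCut G x U := by
    have hpt : ∀ u w : V,
        (if G.Adj u w then α * (if s(u, w) ∈ J.edgeSet then (1:ℝ) else 0) + β * x s(u, w) else 0)
        = α * (if J.Adj u w then (1:ℝ) else 0) + β * (if G.Adj u w then x s(u, w) else 0) := by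
      intro u w
      by_cases h : G.Adj u w
      · simp [h, SimpleGraph.mem_edgeSet]
      · have : ¬ J.Adj u w := fun hj => h (hJG hj)
        simp [h, this]
    unfold xCut
    push_cast [hcutN]
    rw [Finset.mul_sum, Finset.mul_sum, ← Finset.sum_add_distrib]
    refine Finset.sum_congr rfl fun u _ => ?_
    rw [Finset.mul_sum, Finset.mul_sum, ← Finset.sum_add_distrib]
    refine Finset.sum_congr rfl fun w _ => ?_
    simpa using hpt u w
  -- at least one tree edge crosses
  have hcut1 : 1 ≤ cutN := by
    obtain ⟨u0, hu0⟩ := hU1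
    have : ∃ w0, w0 ∉ U := by
      by_contra h
      push_neg at h
      exact hU2 (Finset.eq_univ_iff_forall.mpr h)
    obtain ⟨w0, hw0⟩ := this
    obtain ⟨p⟩ := hJtree.isConnected.preconnected u0 w0
    obtain ⟨d, -, hdf, hds⟩ := p.exists_boundary_dart (↑U : Set V)
      (by simpa using hu0) (by simpa using hw0)
    have hds' : d.snd ∈ Uᶜ := Finset.mem_compl.mpr (by simpa using hds)
    have hdf' : d.fst ∈ U := by simpa using hdf
    calc (1:ℕ) = (if J.Adj d.fst d.snd then 1 else 0) := by simp [d.adj]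
      _ ≤ ∑ w ∈ Uᶜ, if J.Adj d.fst w then 1 else 0 :=
          Finset.single_le_sum (f := fun w => if J.Adj d.fst w then 1 else 0)
            (fun i _ => Nat.zero_le _) hds'
      _ ≤ cutN := Finset.single_le_sum
          (f := fun u => ∑ w ∈ Uᶜ, if J.Adj u w then 1 else 0)
          (fun i _ => Nat.zero_le _) hdf'
  -- parity of the cut
  have hparity : (cutN : ZMod 2) = ((U ∩ T).card : ZMod 2) + ((U ∩ D).card : ZMod 2) := by
    have hsum : ∑ v ∈ U, treeDeg J v
        = (∑ u ∈ U, ∑ w ∈ U, if J.Adj u w then 1 else 0) + cutN := by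
      rw [hcutN, ← Finset.sum_add_distrib]
      refine Finset.sum_congr rfl fun v _ => ?_
      rw [treeDeg_eq, Finset.sum_add_sum_compl]
    have hin : Even (∑ u ∈ U, ∑ w ∈ U, if J.Adj u w then 1 else 0) :=
      even_sym_sum _ (fun u w => by simp [SimpleGraph.adj_comm]) (fun u => by simp) U
    have h1 : ((∑ v ∈ U, treeDeg J v : ℕ) : ZMod 2) = (cutN : ZMod 2) := by
      rw [hsum, Nat.cast_add, zmod2_even hin, zero_add]
    have h2 : ∀ v ∈ U, ((treeDeg J v : ℕ) : ZMod 2)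
        = (if v ∈ T then 1 else 0) + (if v ∈ D then 1 else 0) := by
      intro v _
      by_cases hT : v ∈ T <;> by_cases hDv : v ∈ D
      · have : Even (treeDeg J v) := by
          rcases (hD v).mp hDv with ⟨_, h⟩ | ⟨h, _⟩
          · exact h
          · exact absurd hT h
        rw [zmod2_even this]; simp [hT, hDv]; decide
      · have : Odd (treeDeg J v) := by
          rw [← Nat.not_even_iff_odd]
          intro he
          exact hDv ((hD v).mpr (Or.inl ⟨hT, he⟩))
        rw [zmod2_odd this]; simp [hT, hDv]
      · have : Odd (treeDeg J v) := by
          rcases (hD v).mp hDv with ⟨h, _⟩ | ⟨_, h⟩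
          · exact absurd h hT
          · exact h
        rw [zmod2_odd this]; simp [hT, hDv]
      · have : Even (treeDeg J v) := by
          rw [← Nat.not_odd_iff_even]
          intro ho
          exact hDv ((hD v).mpr (Or.inr ⟨hT, ho⟩))
        rw [zmod2_even this]; simp [hT, hDv]
    rw [← h1, Nat.cast_sum, Finset.sum_congr rfl h2, Finset.sum_add_distrib]
    congr 1
    · rw [Finset.sum_boole, ← Finset.filter_mem_eq_inter]
    · rw [Finset.sum_boole, ← Finset.filter_mem_eq_inter]
  rw [hsplit]
  rcases hcase with hEv | ⟨hUT, hUD, hb, hxb⟩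
  · have hx2 : 2 ≤ xCut G x U := heven U hU1 hU2 hEv
    have hc : (1:ℝ) ≤ (cutN : ℝ) := by exact_mod_cast hcut1
    nlinarith [mul_le_mul_of_nonneg_left hc hα, mul_le_mul_of_nonneg_left hx2 hβ]
  · have hevencut : Even cutN := by
      apply zmod2_even_of_cast
      rw [hparity, zmod2_odd hUT, zmod2_odd hUD]; decide
    have hc2 : 2 ≤ cutN := by
      obtain ⟨k, hk⟩ := hevencut; omega
    have hc : (2:ℝ) ≤ (cutN : ℝ) := by exact_mod_cast hc2
    have hxc : 1 - 2 * α ≤ β * xCut G x U := by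
      rw [div_le_iff₀ hb] at hxb; nlinarith
    nlinarith [mul_le_mul_of_nonneg_left hc hα]
end

section
/- Let G=(V,E) be a graph, T ⊆ V of even cardinality, and t̂ ∈ T a fixed node. Let x* : E → ℝ satisfy x* ≥ 0, x*(δ(S)) ≥ 2 for every T-even set S with ∅ ⊊ S ⊊ V, and the partition inequality x*(δ(P₁,…,P_k)) ≥ k−1 for every partition of V into nonempty sets P₁,…,P_k. Let 0 ≤ τ ≤ 1/2 and let 𝓛 be the family of all T-odd τ-narrow subsets of V∖{t̂}. Then there exist vectors f^U : E → ℝ, one for each U ∈ 𝓛, such that: (1) f^U ≥ 0 for each U ∈ 𝓛; (2) ∑_{U∈𝓛} f^U ≤ x* componentwise; and (3) f^U(δ(U)) ≥ 1 for each U ∈ 𝓛. -/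
open Finset
open scoped Classical

variable {V : Type*}

variable [Fintype V] [DecidableEq V] (G : SimpleGraph V)

/-- the crossing edge set δ(U). -/
noncomputable def Dcut (U : Finset V) : Finset (Sym2 V) :=
  ((U ×ˢ Uᶜ).filter fun p => G.Adj p.1 p.2).image fun p => s(p.1, p.2)

lemma mem_Dcut {U : Finset V} {e : Sym2 V} :
    e ∈ Dcut G U ↔ ∃ u w, u ∈ U ∧ w ∉ U ∧ G.Adj u w ∧ e = s(u, w) := by
  simp only [Dcut, mem_image, mem_filter, mem_product, mem_compl]
  constructor
  · rintro ⟨⟨u, w⟩, ⟨⟨hu, hw⟩, hadj⟩, rfl⟩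
    exact ⟨u, w, hu, hw, hadj, rfl⟩
  · rintro ⟨u, w, hu, hw, hadj, rfl⟩
    exact ⟨(u, w), ⟨⟨hu, hw⟩, hadj⟩, rfl⟩

lemma Dcut_subset_edgeFinset {U : Finset V} : Dcut G U ⊆ G.edgeFinset := by
  intro e he
  rw [mem_Dcut] at he
  obtain ⟨u, w, _, _, hadj, rfl⟩ := he
  simpa [SimpleGraph.mem_edgeFinset] using hadj

lemma xCut_eq_sum_Dcut (y : Sym2 V → ℝ) (U : Finset V) :
    xCut G y U = ∑ e ∈ Dcut G U, y e := by
  rw [xCut, ← Finset.sum_product']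
  rw [← Finset.sum_filter]
  rw [Dcut, Finset.sum_image]
  rintro ⟨u, w⟩ h ⟨u', w'⟩ h' hee
  simp only [mem_coe, mem_filter, mem_product, mem_compl] at h h'
  rw [Sym2.eq_iff] at hee
  rcases hee with ⟨rfl, rfl⟩ | ⟨rfl, rfl⟩
  · rfl
  · exact absurd h'.1.1 h.1.2

lemma xCut_congr (y y' : Sym2 V → ℝ) (h : ∀ e ∈ G.edgeSet, y e = y' e) (U : Finset V) :
    xCut G y U = xCut G y' U := by
  rw [xCut_eq_sum_Dcut, xCut_eq_sum_Dcut]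
  refine Finset.sum_congr rfl fun e he => ?_
  exact h e (SimpleGraph.mem_edgeFinset.mp (Dcut_subset_edgeFinset G he))

lemma Dcut_compl (U : Finset V) : Dcut G Uᶜ = Dcut G U := by
  ext e
  rw [mem_Dcut, mem_Dcut]
  constructor
  · rintro ⟨u, w, hu, hw, hadj, rfl⟩
    exact ⟨w, u, by simpa using hw, by simpa using hu, hadj.symm, Sym2.eq_swap⟩
  · rintro ⟨u, w, hu, hw, hadj, rfl⟩
    exact ⟨w, u, by simpa using hw, by simpa using hu, hadj.symm, Sym2.eq_swap⟩

lemma xCut_compl (y : Sym2 V → ℝ) (U : Finset V) :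
    xCut G y Uᶜ = xCut G y U := by
  rw [xCut_eq_sum_Dcut, xCut_eq_sum_Dcut, Dcut_compl]

lemma xCut_eq_full (y : Sym2 V → ℝ) (A : Finset V) :
    xCut G y A = ∑ p ∈ univ ×ˢ univ,
      if p.1 ∈ A ∧ p.2 ∉ A then (if G.Adj p.1 p.2 then y s(p.1, p.2) else 0) else 0 := by
  rw [xCut, ← Finset.sum_product']
  rw [← Finset.sum_subset (Finset.product_subset_product (subset_univ A) (subset_univ Aᶜ))]
  · refine Finset.sum_congr rfl fun p hp => ?_
    simp only [mem_product, mem_compl] at hp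
    rw [if_pos (show p.1 ∈ A ∧ p.2 ∉ A from ⟨hp.1, hp.2⟩)]
  · intro p hp hnp
    simp only [mem_product, mem_compl] at hnp
    rw [if_neg]
    tauto

lemma xCut_submod (y : Sym2 V → ℝ) (hy : ∀ e, 0 ≤ y e) (S T : Finset V) :
    xCut G y (S ∩ T) + xCut G y (S ∪ T) ≤ xCut G y S + xCut G y T := by
  simp only [xCut_eq_full]
  rw [← Finset.sum_add_distrib, ← Finset.sum_add_distrib]
  refine Finset.sum_le_sum fun p _ => ?_
  have hg0 : 0 ≤ (if G.Adj p.1 p.2 then y s(p.1, p.2) else 0) := by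
    split <;> [exact hy _; exact le_refl 0]
  by_cases h1 : p.1 ∈ S <;> by_cases h2 : p.2 ∈ S <;> by_cases h3 : p.1 ∈ T <;>
    by_cases h4 : p.2 ∈ T
  all_goals simp_all [Finset.mem_inter, Finset.mem_union]

lemma xCut_posimod (y : Sym2 V → ℝ) (hy : ∀ e, 0 ≤ y e) (S T : Finset V) :
    xCut G y (S \ T) + xCut G y (T \ S) ≤ xCut G y S + xCut G y T := by
  have h := xCut_submod G y hy S Tᶜ
  have h1 : S ∩ Tᶜ = S \ T := by ext v; simp
  have h2 : (S ∪ Tᶜ)ᶜ = T \ S := by ext v; simp [and_comm]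
  have h3 : xCut G y (T \ S) = xCut G y (S ∪ Tᶜ) := by rw [← h2, xCut_compl]
  have h4 := xCut_compl G y T
  rw [h1] at h
  linarith

lemma xCut_nonneg (y : Sym2 V → ℝ) (hy : ∀ e, 0 ≤ y e) (A : Finset V) :
    0 ≤ xCut G y A := by
  rw [xCut_eq_sum_Dcut]
  exact Finset.sum_nonneg fun e _ => hy e

lemma ne_univ_of_not_mem {S : Finset V} {v : V} (h : v ∉ S) : S ≠ univ := by
  intro hS; rw [hS] at h; exact h (mem_univ v)

lemma card_inter_split (U W T : Finset V) :
    ((U ∩ W) ∩ T).card + ((U \ W) ∩ T).card = (U ∩ T).card := by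
  rw [← card_union_of_disjoint]
  · congr 1
    ext v; simp only [mem_union, mem_inter, mem_sdiff]; tauto
  · rw [Finset.disjoint_left]
    intro v h1 h2
    simp only [mem_inter, mem_sdiff] at h1 h2
    exact h2.1.2 h1.1.2

lemma card_union_split (U W T : Finset V) :
    ((U ∪ W) ∩ T).card = (U ∩ T).card + ((W \ U) ∩ T).card := by
  rw [← card_union_of_disjoint]
  · congr 1
    ext v; simp only [mem_union, mem_inter, mem_sdiff]; tauto
  · rw [Finset.disjoint_left]
    intro v h1 h2
    simp only [mem_inter, mem_sdiff] at h1 h2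
    exact h2.1.2 h1.1

lemma laminar_of_narrow (T : Finset V) (that : V)
    (x : Sym2 V → ℝ) (hx : ∀ e, 0 ≤ x e)
    (heven : ∀ S : Finset V, S.Nonempty → S ≠ univ → Even ((S ∩ T).card) → 2 ≤ xCut G x S)
    (τ : ℝ) (hτ : τ ≤ 1 / 2)
    {U W : Finset V} (hUt : that ∉ U) (hWt : that ∉ W)
    (hUodd : Odd ((U ∩ T).card)) (hWodd : Odd ((W ∩ T).card))
    (hUn : xCut G x U < 1 + τ) (hWn : xCut G x W < 1 + τ) :
    U ∩ W = ∅ ∨ U ⊆ W ∨ W ⊆ U := by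
  by_contra hcon
  push_neg at hcon
  obtain ⟨hIne, hUW, hWU⟩ := hcon
  have hInter : (U ∩ W).Nonempty := hIne
  have hUd : (U \ W).Nonempty := Finset.sdiff_nonempty.mpr hUW
  have hWd : (W \ U).Nonempty := Finset.sdiff_nonempty.mpr hWU
  have e1 := card_inter_split U W T
  have e2 := card_inter_split W U T
  rw [inter_comm W U] at e2
  have e3 := card_union_split U W T
  rcases Nat.even_or_odd (((U ∩ W) ∩ T).card) with ha | ha
  · -- U∩W and U∪W are T-even
    have h1 : 2 ≤ xCut G x (U ∩ W) := by
      refine heven _ hInter (ne_univ_of_not_mem (v := that) ?_) ha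
      simp only [mem_inter]; tauto
    have h2 : 2 ≤ xCut G x (U ∪ W) := by
      refine heven _ (hInter.mono (by intro v hv; simp only [mem_inter, mem_union] at *; tauto))
        (ne_univ_of_not_mem (v := that) ?_) ?_
      · simp only [mem_union]; tauto
      · obtain ⟨m, hm⟩ := ha
        obtain ⟨k, hk⟩ := hUodd
        obtain ⟨l, hl⟩ := hWodd
        refine ⟨(((U ∪ W) ∩ T).card) / 2, ?_⟩
        omega
    have := xCut_submod G x hx U W
    linarith
  · -- U∖W and W∖U are T-even
    have h1 : 2 ≤ xCut G x (U \ W) := by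
      refine heven _ hUd (ne_univ_of_not_mem (v := that) ?_) ?_
      · simp only [mem_sdiff]; tauto
      · obtain ⟨m, hm⟩ := ha
        obtain ⟨k, hk⟩ := hUodd
        refine ⟨(((U \ W) ∩ T).card) / 2, ?_⟩
        omega
    have h2 : 2 ≤ xCut G x (W \ U) := by
      refine heven _ hWd (ne_univ_of_not_mem (v := that) ?_) ?_
      · simp only [mem_sdiff]; tauto
      · obtain ⟨m, hm⟩ := ha
        obtain ⟨l, hl⟩ := hWodd
        refine ⟨(((W \ U) ∩ T).card) / 2, ?_⟩
        omega
    have := xCut_posimod G x hx U W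
    linarith

lemma sum_mod_two_eq_card {ι : Type*} [DecidableEq ι] {s : Finset ι} {f : ι → ℕ}
    (h : ∀ i ∈ s, Odd (f i)) : (∑ i ∈ s, f i) % 2 = s.card % 2 := by
  induction s using Finset.induction with
  | empty => simp
  | @insert a s hna ih =>
    rw [sum_insert hna, card_insert_of_notMem hna]
    have ha := h a (mem_insert_self a s)
    have hrest := ih fun i hi => h i (mem_insert_of_mem hi)
    rw [Nat.odd_iff] at ha
    omega

lemma region_nonempty (T : Finset V) (that : V)
    (x : Sym2 V → ℝ)
    (hpart : ∀ P : Finset (Finset V), (∀ p ∈ P, p.Nonempty) →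
      (P : Set (Finset V)).PairwiseDisjoint id → P.biUnion id = univ →
      (P.card : ℝ) - 1 ≤ (∑ p ∈ P, xCut G x p) / 2)
    (τ : ℝ) (hτ0 : 0 ≤ τ) (hτ : τ ≤ 1 / 2)
    (L' : Finset (Finset V))
    (hL' : ∀ S ∈ L', that ∉ S ∧ Odd ((S ∩ T).card) ∧ xCut G x S < 1 + τ)
    (hlam : ∀ U ∈ L', ∀ W ∈ L', U ∩ W = ∅ ∨ U ⊆ W ∨ W ⊆ U)
    (U : Finset V) (hU : U ∈ L') :
    (U \ (L'.filter (· ⊂ U)).biUnion id).Nonempty := by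
  by_contra hreg
  rw [Finset.not_nonempty_iff_eq_empty, Finset.sdiff_eq_empty_iff_subset] at hreg
  set F := L'.filter (· ⊂ U) with hF
  set M := F.filter (fun C => ∀ C' ∈ F, ¬ C ⊂ C') with hM
  -- every member of F is below a maximal one
  have hMF : ∀ C ∈ F, ∃ C' ∈ M, C ⊆ C' := by
    intro C hC
    obtain ⟨m, hm, hmax⟩ := Finset.exists_maximal (s := F.filter (C ⊆ ·)) ⟨C, by simp [hC]⟩
    simp only [mem_filter] at hm
    refine ⟨m, ?_, hm.2⟩
    rw [hM, mem_filter]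
    refine ⟨hm.1, fun C' hC' hss => ?_⟩
    exact (ssubset_irrefl m) (Finset.ssubset_of_ssubset_of_subset hss
      (hmax (mem_filter.mpr <| by exact ⟨hC', hm.2.trans hss.subset⟩) hss.subset))
  have hMU : U = M.biUnion id := by
    apply Finset.Subset.antisymm
    · intro v hv
      have := hreg hv
      rw [mem_biUnion] at this
      obtain ⟨C, hC, hvC⟩ := this
      obtain ⟨C', hC', hsub⟩ := hMF C hC
      rw [mem_biUnion]
      exact ⟨C', hC', hsub hvC⟩
    · intro v hv
      rw [mem_biUnion] at hv
      obtain ⟨C, hC, hvC⟩ := hv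
      rw [hM, mem_filter, hF, mem_filter] at hC
      exact hC.1.2.subset hvC
  -- members of M are pairwise disjoint
  have hMdisj : ∀ C ∈ M, ∀ C' ∈ M, C ≠ C' → C ∩ C' = ∅ := by
    intro C hC C' hC' hne
    rw [hM, mem_filter] at hC hC'
    have hCL : C ∈ L' := by have := hC.1; rw [hF, mem_filter] at this; exact this.1
    have hCL' : C' ∈ L' := by have := hC'.1; rw [hF, mem_filter] at this; exact this.1
    rcases hlam C hCL C' hCL' with h | h | h
    · exact h
    · exact absurd (Finset.ssubset_iff_subset_ne.mpr ⟨h, hne⟩) (hC.2 C' hC'.1)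
    · exact absurd (Finset.ssubset_iff_subset_ne.mpr ⟨h, hne.symm⟩) (hC'.2 C hC.1)
  -- parity: M.card is odd
  have hcardsum : (U ∩ T).card = ∑ C ∈ M, (C ∩ T).card := by
    rw [← Finset.card_biUnion]
    · congr 1
      ext v
      simp only [mem_inter, mem_biUnion, hMU, id]
      tauto
    · intro C hC C' hC' hne
      rw [Function.onFun, Finset.disjoint_left]
      intro v hv hv'
      have hvin : v ∈ C ∩ C' := mem_inter.mpr ⟨(mem_inter.mp hv).1, (mem_inter.mp hv').1⟩
      rw [hMdisj C hC C' hC' hne] at hvin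
      exact absurd hvin (Finset.notMem_empty v)
  have hModd : Odd M.card := by
    have hUodd := (hL' U hU).2.1
    rw [Nat.odd_iff] at hUodd ⊢
    rw [hcardsum] at hUodd
    rw [← sum_mod_two_eq_card (fun C hC => ?_)]
    · exact hUodd
    · have : C ∈ L' := by
        have := hC; rw [hM, mem_filter, hF, mem_filter] at this; exact this.1.1
      exact (hL' C this).2.1
  -- M.card ≠ 1
  have hM1 : M.card ≠ 1 := by
    intro h1
    obtain ⟨C, hCeq⟩ := Finset.card_eq_one.mp h1
    have : U = C := by rw [hMU, hCeq, Finset.singleton_biUnion, id]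
    have hCF : C ∈ F := by
      have : C ∈ M := by rw [hCeq]; exact mem_singleton_self C
      rw [hM, mem_filter] at this; exact this.1
    rw [hF, mem_filter] at hCF
    have hCU : C ⊂ U := hCF.2
    rw [← ‹U = C›] at hCU
    exact (ssubset_irrefl U) hCU
  have hM3 : 3 ≤ M.card := by
    obtain ⟨k, hk⟩ := hModd
    omega
  -- build the partition M ∪ {Uᶜ}
  have hUc : Uᶜ ∉ M := by
    intro hmem
    have hsub : Uᶜ ⊆ U := by
      have : Uᶜ ∈ F := by rw [hM, mem_filter] at hmem; exact hmem.1
      rw [hF, mem_filter] at this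
      exact this.2.subset
    have hthatU : that ∉ U := (hL' U hU).1
    exact hthatU (hsub (mem_compl.mpr hthatU))
  set P0 : Finset (Finset V) := insert Uᶜ M with hP0
  have hcardP0 : P0.card = M.card + 1 := Finset.card_insert_of_notMem hUc
  have hnonempty : ∀ p ∈ P0, p.Nonempty := by
    intro p hp
    rw [hP0, mem_insert] at hp
    rcases hp with rfl | hp
    · exact ⟨that, mem_compl.mpr (hL' U hU).1⟩
    · have hpL : p ∈ L' := by rw [hM, mem_filter, hF, mem_filter] at hp; exact hp.1.1
      have := (hL' p hpL).2.1
      have hpos : 0 < (p ∩ T).card := by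
        rcases this with ⟨k, hk⟩; omega
      obtain ⟨v, hv⟩ := Finset.card_pos.mp hpos
      exact ⟨v, (mem_inter.mp hv).1⟩
  have hdisj : (P0 : Set (Finset V)).PairwiseDisjoint id := by
    intro a ha b hb hne
    simp only [Finset.coe_insert, Set.mem_insert_iff, mem_coe, hP0] at ha hb
    have key : ∀ C ∈ M, Disjoint Uᶜ C := by
      intro C hC
      have : C ⊆ U := by
        rw [hM, mem_filter, hF, mem_filter] at hC; exact hC.1.2.subset
      rw [Finset.disjoint_left]
      intro v hv hvC
      exact (mem_compl.mp hv) (this hvC)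
    rcases ha with rfl | ha <;> rcases hb with rfl | hb
    · exact absurd rfl hne
    · exact key b hb
    · exact (key a ha).symm
    · rw [Function.onFun, id, id, Finset.disjoint_left]
      intro v hv hv'
      have hvin : v ∈ a ∩ b := mem_inter.mpr ⟨hv, hv'⟩
      rw [hMdisj a ha b hb hne] at hvin
      exact absurd hvin (Finset.notMem_empty v)
  have hcover : P0.biUnion id = univ := by
    ext v
    simp only [mem_biUnion, mem_univ, iff_true, hP0, mem_insert]
    by_cases hvU : v ∈ U
    · rw [hMU, mem_biUnion] at hvU
      obtain ⟨C, hC, hvC⟩ := hvU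
      exact ⟨C, Or.inr hC, hvC⟩
    · exact ⟨Uᶜ, Or.inl rfl, mem_compl.mpr hvU⟩
  have hpart0 := hpart P0 hnonempty hdisj hcover
  rw [hcardP0] at hpart0
  -- bound the sum
  have hsum : ∑ p ∈ P0, xCut G x p = xCut G x U + ∑ C ∈ M, xCut G x C := by
    rw [hP0, Finset.sum_insert hUc, xCut_compl]
  have hboundM : ∑ C ∈ M, xCut G x C < (M.card : ℝ) * (1 + τ) := by
    have hMne : M.Nonempty := Finset.card_pos.mp (by omega)
    calc ∑ C ∈ M, xCut G x C < ∑ C ∈ M, (1 + τ) := by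
          apply Finset.sum_lt_sum_of_nonempty hMne
          intro C hC
          have hCL : C ∈ L' := by
            rw [hM, mem_filter, hF, mem_filter] at hC; exact hC.1.1
          exact (hL' C hCL).2.2
      _ = (M.card : ℝ) * (1 + τ) := by rw [Finset.sum_const, nsmul_eq_mul]
  have hUb : xCut G x U < 1 + τ := (hL' U hU).2.2
  have hcast : (3 : ℝ) ≤ (M.card : ℝ) := by exact_mod_cast hM3
  push_cast at hpart0
  have hmul : (M.card : ℝ) * (1 + τ) ≤ (M.card : ℝ) * (3 / 2) := by
    have h32 : 1 + τ ≤ 3 / 2 := by linarith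
    exact mul_le_mul_of_nonneg_left h32 (Nat.cast_nonneg _)
  linarith

lemma hall_cond (T : Finset V) (that : V)
    (x : Sym2 V → ℝ) (hx : ∀ e, 0 ≤ x e)
    (hpart : ∀ P : Finset (Finset V), (∀ p ∈ P, p.Nonempty) →
      (P : Set (Finset V)).PairwiseDisjoint id → P.biUnion id = univ →
      (P.card : ℝ) - 1 ≤ (∑ p ∈ P, xCut G x p) / 2)
    (τ : ℝ) (hτ0 : 0 ≤ τ) (hτ : τ ≤ 1 / 2)
    (L' : Finset (Finset V))
    (hL' : ∀ S ∈ L', that ∉ S ∧ Odd ((S ∩ T).card) ∧ xCut G x S < 1 + τ)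
    (hlam : ∀ U ∈ L', ∀ W ∈ L', U ∩ W = ∅ ∨ U ⊆ W ∨ W ⊆ U) :
    (L'.card : ℝ) ≤ ∑ e ∈ L'.biUnion (Dcut G), x e := by
  classical
  set region : Finset V → Finset V := fun U => U \ (L'.filter (· ⊂ U)).biUnion id with hregion
  have hregmem : ∀ (U : Finset V) (v : V),
      v ∈ region U ↔ v ∈ U ∧ ∀ C ∈ L', C ⊂ U → v ∉ C := by
    intro U v
    simp only [hregion, mem_sdiff, mem_biUnion, mem_filter, id, not_exists]
    constructor
    · rintro ⟨hv, h2⟩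
      exact ⟨hv, fun C hC hss hvC => h2 C ⟨⟨hC, hss⟩, hvC⟩⟩
    · rintro ⟨hv, h2⟩
      exact ⟨hv, fun C hCC => h2 C hCC.1.1 hCC.1.2 hCC.2⟩
  have hregne : ∀ U ∈ L', (region U).Nonempty :=
    fun U hU => region_nonempty G T that x hpart τ hτ0 hτ L' hL' hlam U hU
  set Rinf : Finset V := (L'.biUnion id)ᶜ with hRinf
  have hRinfmem : ∀ v : V, v ∈ Rinf ↔ ∀ C ∈ L', v ∉ C := by
    intro v
    simp only [hRinf, mem_compl, mem_biUnion, id, not_exists]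
    tauto
  have hthatRinf : that ∈ Rinf := (hRinfmem that).mpr (fun C hC => (hL' C hC).1)
  set P : Finset (Finset V) := insert Rinf (L'.image region) with hP
  -- region is injective on L'
  have hinj : ∀ U ∈ L', ∀ W ∈ L', region U = region W → U = W := by
    intro U hU W hW heq
    by_contra hne
    obtain ⟨v, hv⟩ := hregne U hU
    have hvW : v ∈ region W := heq ▸ hv
    rw [hregmem] at hv hvW
    rcases hlam U hU W hW with h | h | h
    · have : v ∈ U ∩ W := mem_inter.mpr ⟨hv.1, hvW.1⟩
      rw [h] at this
      exact absurd this (Finset.notMem_empty v)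
    · exact hvW.2 U hU (Finset.ssubset_iff_subset_ne.mpr ⟨h, hne⟩) hv.1
    · exact hv.2 W hW (Finset.ssubset_iff_subset_ne.mpr ⟨h, fun hh => hne hh.symm⟩) hvW.1
  have hRinfnotim : Rinf ∉ L'.image region := by
    rw [mem_image]
    rintro ⟨U, hU, hUeq⟩
    obtain ⟨v, hv⟩ := hregne U hU
    have hvU : v ∈ U := ((hregmem U v).mp hv).1
    have : v ∈ Rinf := hUeq ▸ hv
    exact (hRinfmem v).mp this U hU hvU
  have hcardP : P.card = L'.card + 1 := by
    rw [hP, card_insert_of_notMem hRinfnotim,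
      Finset.card_image_of_injOn (fun U hU W hW => hinj U hU W hW)]
  -- parts are nonempty
  have hPne : ∀ p ∈ P, p.Nonempty := by
    intro p hp
    rw [hP, mem_insert] at hp
    rcases hp with rfl | hp
    · exact ⟨that, hthatRinf⟩
    · obtain ⟨U, hU, rfl⟩ := mem_image.mp hp
      exact hregne U hU
  -- pairwise disjoint
  have hPdisj : (P : Set (Finset V)).PairwiseDisjoint id := by
    intro a ha b hb hne
    simp only [hP, Finset.coe_insert, Set.mem_insert_iff, mem_coe, mem_image] at ha hb
    rw [Function.onFun, id, id, Finset.disjoint_left]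
    intro v hva hvb
    rcases ha with rfl | ⟨U, hU, rfl⟩
    · rcases hb with rfl | ⟨W, hW, rfl⟩
      · exact hne rfl
      · exact (hRinfmem v).mp hva W hW ((hregmem W v).mp hvb).1
    · rcases hb with rfl | ⟨W, hW, rfl⟩
      · exact (hRinfmem v).mp hvb U hU ((hregmem U v).mp hva).1
      · have hUW : U ≠ W := fun h => hne (h ▸ rfl)
        rw [hregmem] at hva hvb
        rcases hlam U hU W hW with h | h | h
        · have : v ∈ U ∩ W := mem_inter.mpr ⟨hva.1, hvb.1⟩
          rw [h] at this
          exact absurd this (Finset.notMem_empty v)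
        · exact hvb.2 U hU (Finset.ssubset_iff_subset_ne.mpr ⟨h, hUW⟩) hva.1
        · exact hva.2 W hW (Finset.ssubset_iff_subset_ne.mpr ⟨h, hUW.symm⟩) hvb.1
  -- covers
  have hPcover : P.biUnion id = univ := by
    ext v
    simp only [mem_biUnion, mem_univ, iff_true, hP, mem_insert, id]
    by_cases hv : ∀ C ∈ L', v ∉ C
    · exact ⟨Rinf, Or.inl rfl, (hRinfmem v).mpr hv⟩
    · push_neg at hv
      have hFv : (L'.filter (v ∈ ·)).Nonempty := by
        obtain ⟨C, hC, hvC⟩ := hv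
        exact ⟨C, mem_filter.mpr ⟨hC, hvC⟩⟩
      obtain ⟨m, hm, hmin⟩ := Finset.exists_minimal hFv
      simp only [mem_filter] at hm
      refine ⟨region m, Or.inr (mem_image.mpr ⟨m, hm.1, rfl⟩), ?_⟩
      rw [hregmem]
      refine ⟨hm.2, fun C hC hss hvC => ?_⟩
      exact (ssubset_irrefl C) (Finset.ssubset_of_ssubset_of_subset hss
        (hmin (mem_filter.mpr ⟨hC, hvC⟩) hss.subset))
  have hpartP := hpart P hPne hPdisj hPcover
  rw [hcardP] at hpartP
  push_cast at hpartP
  -- now bound ∑ p ∈ P, xCut x p by 2 * ∑ e ∈ N, x e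
  set N : Finset (Sym2 V) := L'.biUnion (Dcut G) with hN
  -- every vertex pair not separated by any member of L' is not separated by any part
  have hsep : ∀ p ∈ P, Dcut G p ⊆ N := by
    intro p hp e he
    rw [mem_Dcut] at he
    obtain ⟨u, w, hu, hw, hadj, rfl⟩ := he
    by_contra hnotN
    have hsame : ∀ C ∈ L', (u ∈ C ↔ w ∈ C) := by
      intro C hC
      constructor
      · intro huC
        by_contra hwC
        exact hnotN (mem_biUnion.mpr ⟨C, hC, (mem_Dcut G).mpr ⟨u, w, huC, hwC, hadj, rfl⟩⟩)
      · intro hwC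
        by_contra huC
        exact hnotN (mem_biUnion.mpr ⟨C, hC,
          (mem_Dcut G).mpr ⟨w, u, hwC, huC, hadj.symm, Sym2.eq_swap⟩⟩)
    have : u ∈ p ↔ w ∈ p := by
      rw [hP, mem_insert] at hp
      rcases hp with rfl | hp
      · rw [hRinfmem, hRinfmem]
        constructor
        · intro h C hC hwC; exact (h C hC) ((hsame C hC).mpr hwC)
        · intro h C hC huC; exact (h C hC) ((hsame C hC).mp huC)
      · obtain ⟨U, hU, rfl⟩ := mem_image.mp hp
        rw [hregmem, hregmem]
        constructor
        · rintro ⟨h1, h2⟩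
          exact ⟨(hsame U hU).mp h1, fun C hC hss hwC => h2 C hC hss ((hsame C hC).mpr hwC)⟩
        · rintro ⟨h1, h2⟩
          exact ⟨(hsame U hU).mpr h1, fun C hC hss huC => h2 C hC hss ((hsame C hC).mp huC)⟩
    exact hw (this.mp hu)
  have hsum1 : ∑ p ∈ P, xCut G x p ≤ 2 * ∑ e ∈ N, x e := by
    have step1 : ∀ p ∈ P, xCut G x p = ∑ e ∈ N, (if e ∈ Dcut G p then x e else 0) := by
      intro p hp
      rw [xCut_eq_sum_Dcut]
      have h0 : ∑ e ∈ Dcut G p, x e = ∑ e ∈ Dcut G p, (if e ∈ Dcut G p then x e else 0) :=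
        Finset.sum_congr rfl fun e he => (if_pos he).symm
      rw [h0, Finset.sum_subset (hsep p hp) (fun e heN henotD => if_neg henotD)]
    calc ∑ p ∈ P, xCut G x p
        = ∑ p ∈ P, ∑ e ∈ N, (if e ∈ Dcut G p then x e else 0) :=
          Finset.sum_congr rfl step1
      _ = ∑ e ∈ N, ∑ p ∈ P, (if e ∈ Dcut G p then x e else 0) := Finset.sum_comm
      _ ≤ ∑ e ∈ N, 2 * x e := by
          refine Finset.sum_le_sum fun e heN => ?_
          obtain ⟨U0, hU0, heU0⟩ := mem_biUnion.mp heN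
          obtain ⟨u, w, hu, hw, hadj, rfl⟩ := (mem_Dcut G).mp heU0
          have hxe : 0 ≤ x s(u, w) := hx _
          rw [← Finset.sum_filter]
          rw [Finset.sum_const, nsmul_eq_mul]
          have hcard2 : (P.filter (fun p => s(u, w) ∈ Dcut G p)).card ≤ 2 := by
            have hsub : P.filter (fun p => s(u, w) ∈ Dcut G p) ⊆
                P.filter (fun p => u ∈ p) ∪ P.filter (fun p => w ∈ p) := by
              intro p hp
              rw [mem_filter] at hp
              obtain ⟨u', w', hu', hw', hadj', heq⟩ := (mem_Dcut G).mp hp.2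
              rw [mem_union, mem_filter, mem_filter]
              rw [Sym2.eq_iff] at heq
              rcases heq with ⟨rfl, rfl⟩ | ⟨rfl, rfl⟩
              · exact Or.inl ⟨hp.1, hu'⟩
              · exact Or.inr ⟨hp.1, hu'⟩
            have h1 : ∀ (z : V), (P.filter (fun p => z ∈ p)).card ≤ 1 := by
              intro z
              rw [Finset.card_le_one]
              intro a ha b hb
              rw [mem_filter] at ha hb
              by_contra hne
              have := hPdisj (mem_coe.mpr ha.1) (mem_coe.mpr hb.1) hne
              rw [Function.onFun, id, id, Finset.disjoint_left] at this
              exact this ha.2 hb.2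
            calc (P.filter (fun p => s(u, w) ∈ Dcut G p)).card
                ≤ (P.filter (fun p => u ∈ p) ∪ P.filter (fun p => w ∈ p)).card :=
                  Finset.card_le_card hsub
              _ ≤ _ := Finset.card_union_le _ _
              _ ≤ 2 := by
                  have := h1 u
                  have := h1 w
                  omega
          exact mul_le_mul_of_nonneg_right (by exact_mod_cast hcard2) hxe
      _ = 2 * ∑ e ∈ N, x e := by rw [Finset.mul_sum]
  linarith

lemma frac_hall {α β : Type*} [Fintype α] [Fintype β] [DecidableEq α] [DecidableEq β]
    (L : Finset α) (D : α → Finset β) (x : β → ℝ) (hx : ∀ e, 0 ≤ x e)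
    (hall : ∀ L' ⊆ L, (L'.card : ℝ) ≤ ∑ e ∈ L'.biUnion D, x e) :
    ∃ f : α → β → ℝ, (∀ U e, 0 ≤ f U e) ∧ (∀ e, ∑ U ∈ L, f U e ≤ x e) ∧
      (∀ U ∈ L, 1 ≤ ∑ e ∈ D U, f U e) := by
  classical
  set S : Set (α → β → ℝ) := {g | (∀ U e, 0 ≤ g U e) ∧
    (∀ U e, g U e ≠ 0 → U ∈ L ∧ e ∈ D U) ∧
    (∀ e, ∑ U ∈ L, g U e ≤ x e) ∧ (∀ U ∈ L, ∑ e ∈ D U, g U e ≤ 1)} with hS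
  set Φ : (α → β → ℝ) → ℝ := fun g => ∑ U ∈ L, ∑ e ∈ D U, g U e with hΦ
  have hScompact : IsCompact S := by
    have hsub : S ⊆ Set.pi Set.univ (fun _ : α => Set.pi Set.univ (fun _ : β => Set.Icc (0:ℝ) 1)) := by
      intro g hg
      rw [hS, Set.mem_setOf_eq] at hg
      intro U _
      intro e _
      refine ⟨hg.1 U e, ?_⟩
      by_cases hne : g U e = 0
      · rw [hne]; norm_num
      · obtain ⟨hUL, heD⟩ := hg.2.1 U e hne
        calc g U e ≤ ∑ e' ∈ D U, g U e' := Finset.single_le_sum (fun e' _ => hg.1 U e') heD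
          _ ≤ 1 := hg.2.2.2 U hUL
    have hclosed : IsClosed S := by
      have hrw : S = (⋂ (U : α) (e : β), {g : α → β → ℝ | 0 ≤ g U e}) ∩
          ((⋂ (U : α) (e : β), {g : α → β → ℝ | g U e ≠ 0 → U ∈ L ∧ e ∈ D U}) ∩
          ((⋂ (e : β), {g : α → β → ℝ | ∑ U ∈ L, g U e ≤ x e}) ∩
          (⋂ (U : α), {g : α → β → ℝ | U ∈ L → ∑ e ∈ D U, g U e ≤ 1}))) := by
        ext g
        simp only [hS, Set.mem_setOf_eq, Set.mem_inter_iff, Set.mem_iInter]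
      rw [hrw]
      have hev : ∀ (U : α) (e : β), Continuous (fun g : α → β → ℝ => g U e) :=
        fun U e => (continuous_apply e).comp (continuous_apply U)
      refine IsClosed.inter ?_ (IsClosed.inter ?_ (IsClosed.inter ?_ ?_))
      · exact isClosed_iInter fun U => isClosed_iInter fun e =>
          isClosed_le continuous_const (hev U e)
      · refine isClosed_iInter fun U => isClosed_iInter fun e => ?_
        by_cases hc : U ∈ L ∧ e ∈ D U
        · have : {g : α → β → ℝ | g U e ≠ 0 → U ∈ L ∧ e ∈ D U} = Set.univ := by
            ext g; simp [hc]
          rw [this]; exact isClosed_univ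
        · have : {g : α → β → ℝ | g U e ≠ 0 → U ∈ L ∧ e ∈ D U} = {g | g U e = 0} := by
            ext g
            simp only [Set.mem_setOf_eq]
            constructor
            · intro h; by_contra hne; exact hc (h hne)
            · intro h hne; exact absurd h hne
          rw [this]; exact isClosed_eq (hev U e) continuous_const
      · exact isClosed_iInter fun e => isClosed_le
          (continuous_finset_sum L fun U _ => hev U e) continuous_const
      · refine isClosed_iInter fun U => ?_
        by_cases hc : U ∈ L
        · have : {g : α → β → ℝ | U ∈ L → ∑ e ∈ D U, g U e ≤ 1} =
              {g : α → β → ℝ | ∑ e ∈ D U, g U e ≤ 1} := by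
            ext g; simp [hc]
          rw [this]
          exact isClosed_le (continuous_finset_sum (D U) fun e _ => hev U e) continuous_const
        · have : {g : α → β → ℝ | U ∈ L → ∑ e ∈ D U, g U e ≤ 1} = Set.univ := by
            ext g; simp [hc]
          rw [this]; exact isClosed_univ
    exact (isCompact_univ_pi (fun _ => isCompact_univ_pi fun _ => isCompact_Icc)).of_isClosed_subset hclosed hsub
  have hS0 : (fun _ _ => (0:ℝ)) ∈ S := by
    rw [hS, Set.mem_setOf_eq]
    refine ⟨fun _ _ => le_refl 0, fun U e h => absurd rfl h, fun e => ?_, fun U _ => by simp⟩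
    simpa using hx e
  have hΦcont : Continuous Φ :=
    continuous_finset_sum L fun U _ => continuous_finset_sum (D U) fun e _ =>
      (continuous_apply e).comp (continuous_apply U)
  obtain ⟨f, hfS, hfmax⟩ := hScompact.exists_isMaxOn ⟨_, hS0⟩ hΦcont.continuousOn
  have hfS' := hfS
  rw [hS, Set.mem_setOf_eq] at hfS'
  obtain ⟨hfpos, hfsupp, hfload, hfdem⟩ := hfS'
  suffices hgoal : ∀ U ∈ L, 1 ≤ ∑ e ∈ D U, f U e by exact ⟨f, hfpos, hfload, hgoal⟩
  by_contra hcon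
  push_neg at hcon
  obtain ⟨U₀, hU₀L, hdef⟩ := hcon
  set step : α → α → Prop := fun U W => U ∈ L ∧ W ∈ L ∧ ∃ e, e ∈ D U ∧ e ∈ D W ∧ 0 < f W e
    with hstepdef
  have hreachL : ∀ W, Relation.ReflTransGen step U₀ W → W ∈ L := by
    intro W h
    induction h with
    | refl => exact hU₀L
    | tail _ hstep _ => exact hstep.2.1
  have Qlem : ∀ W, Relation.ReflTransGen step U₀ W → ∀ ε : ℝ, 0 < ε →
      ∃ ε' : ℝ, ∃ g : α → β → ℝ, 0 < ε' ∧ ε' ≤ ε ∧ g ∈ S ∧ Φ g = Φ f ∧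
        (∀ e, ∑ U ∈ L, g U e = ∑ U ∈ L, f U e) ∧
        (∀ U e, f U e - ε ≤ g U e) ∧ (∑ e ∈ D W, g W e) + ε' ≤ 1 := by
    intro W hreach
    induction hreach with
    | refl =>
      intro ε hε
      refine ⟨min ε (1 - ∑ e ∈ D U₀, f U₀ e), f, lt_min hε (by linarith),
        min_le_left _ _, hfS, rfl, fun e => rfl, fun U e => by linarith, ?_⟩
      have := min_le_right ε (1 - ∑ e ∈ D U₀, f U₀ e)
      linarith
    | @tail W' Z hre hstep ih =>
      intro ε hε
      obtain ⟨hW'L, hZL, e₀, he₀W, he₀Z, hpos⟩ := hstep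
      set ε₁ := min (ε / 2) (f Z e₀ / 2) with hε₁def
      have hε₁pos : 0 < ε₁ := lt_min (by linarith) (by linarith)
      obtain ⟨ε', g, hε'0, hε'le, hgS, hgΦ, hgload, hglow, hgslack⟩ := ih ε₁ hε₁pos
      have hgS' := hgS
      rw [hS, Set.mem_setOf_eq] at hgS'
      obtain ⟨hgpos, hgsupp, hgld, hgdem⟩ := hgS'
      have hε₁a : ε₁ ≤ ε / 2 := min_le_left _ _
      have hε₁b : ε₁ ≤ f Z e₀ / 2 := min_le_right _ _
      set g' : α → β → ℝ := fun U e => g U e + (if U = W' ∧ e = e₀ then ε' else 0)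
        - (if U = Z ∧ e = e₀ then ε' else 0) with hg'def
      have hgZ : ε' ≤ g Z e₀ := by
        have h1 : f Z e₀ - ε₁ ≤ g Z e₀ := hglow Z e₀
        linarith
      have htot : ∀ U, ∑ e ∈ D U, g' U e = (∑ e ∈ D U, g U e)
          + (if U = W' then ε' else 0) - (if U = Z then ε' else 0) := by
        intro U
        have h1 : ∑ e ∈ D U, (if U = W' ∧ e = e₀ then ε' else 0)
            = (if U = W' then ε' else 0) := by
          by_cases hUW : U = W'
          · subst hUW
            simp [Finset.sum_ite_eq', he₀W]
          · rw [if_neg hUW]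
            exact Finset.sum_eq_zero fun e _ => if_neg (fun h => hUW h.1)
        have h2 : ∑ e ∈ D U, (if U = Z ∧ e = e₀ then ε' else 0)
            = (if U = Z then ε' else 0) := by
          by_cases hUZ : U = Z
          · subst hUZ
            simp [Finset.sum_ite_eq', he₀Z]
          · rw [if_neg hUZ]
            exact Finset.sum_eq_zero fun e _ => if_neg (fun h => hUZ h.1)
        rw [hg'def]
        simp only
        rw [Finset.sum_sub_distrib, Finset.sum_add_distrib, h1, h2]
      have hloadeq : ∀ e, ∑ U ∈ L, g' U e = ∑ U ∈ L, g U e := by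
        intro e
        have h1 : ∑ U ∈ L, (if U = W' ∧ e = e₀ then ε' else 0)
            = (if e = e₀ then ε' else 0) := by
          by_cases he : e = e₀
          · subst he
            simp [Finset.sum_ite_eq', hW'L]
          · rw [if_neg he]
            exact Finset.sum_eq_zero fun U _ => if_neg (fun h => he h.2)
        have h2 : ∑ U ∈ L, (if U = Z ∧ e = e₀ then ε' else 0)
            = (if e = e₀ then ε' else 0) := by
          by_cases he : e = e₀
          · subst he
            simp [Finset.sum_ite_eq', hZL]
          · rw [if_neg he]
            exact Finset.sum_eq_zero fun U _ => if_neg (fun h => he h.2)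
        rw [hg'def]
        simp only
        rw [Finset.sum_sub_distrib, Finset.sum_add_distrib, h1, h2]
        ring
      have hg'S : g' ∈ S := by
        rw [hS, Set.mem_setOf_eq]
        refine ⟨?_, ?_, ?_, ?_⟩
        · intro U e
          rw [hg'def]
          simp only
          by_cases hZc : U = Z ∧ e = e₀
          · rw [if_pos hZc]
            by_cases hWc : U = W' ∧ e = e₀
            · rw [if_pos hWc]
              have := hgpos U e
              linarith
            · rw [if_neg hWc]
              obtain ⟨rfl, rfl⟩ := hZc
              linarith [hgZ]
          · rw [if_neg hZc]
            by_cases hWc : U = W' ∧ e = e₀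
            · rw [if_pos hWc]
              have := hgpos U e
              linarith
            · rw [if_neg hWc]
              have := hgpos U e
              linarith
        · intro U e hne
          by_cases hZc : U = Z ∧ e = e₀
          · obtain ⟨rfl, rfl⟩ := hZc
            exact ⟨hZL, he₀Z⟩
          · by_cases hWc : U = W' ∧ e = e₀
            · obtain ⟨rfl, rfl⟩ := hWc
              exact ⟨hW'L, he₀W⟩
            · apply hgsupp U e
              intro h0
              apply hne
              rw [hg'def]
              simp only
              rw [if_neg hZc, if_neg hWc, h0]
              ring
        · intro e
          rw [hloadeq e]
          exact hgld e
        · intro U hUL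
          rw [htot U]
          by_cases hUW : U = W' <;> by_cases hUZ : U = Z
          · rw [if_pos hUW, if_pos hUZ]
            have := hgdem U hUL
            linarith
          · rw [if_pos hUW, if_neg hUZ]
            subst hUW
            linarith [hgslack]
          · rw [if_neg hUW, if_pos hUZ]
            have := hgdem U hUL
            linarith
          · rw [if_neg hUW, if_neg hUZ]
            have := hgdem U hUL
            linarith
      have hΦeq : Φ g' = Φ f := by
        rw [hΦ]
        simp only
        rw [Finset.sum_congr rfl (fun U _ => htot U)]
        rw [Finset.sum_sub_distrib, Finset.sum_add_distrib]
        rw [Finset.sum_ite_eq' L W' (fun _ => ε'), if_pos hW'L]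
        rw [Finset.sum_ite_eq' L Z (fun _ => ε'), if_pos hZL]
        have : ∑ U ∈ L, ∑ e ∈ D U, g U e = Φ g := rfl
        rw [this, hgΦ]
        ring
      refine ⟨ε', g', hε'0, by linarith, hg'S, hΦeq,
        fun e => (hloadeq e).trans ((hgload e)), ?_, ?_⟩
      · intro U e
        have h1 : f U e - ε₁ ≤ g U e := hglow U e
        rw [hg'def]
        simp only
        have hb : (0:ℝ) ≤ (if U = W' ∧ e = e₀ then ε' else 0) := by
          split_ifs <;> linarith
        have hc : (if U = Z ∧ e = e₀ then ε' else 0) ≤ ε' := by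
          split_ifs <;> linarith
        linarith
      · rw [htot Z]
        by_cases hZW : Z = W'
        · rw [if_pos hZW, if_pos rfl]
          have : (∑ e ∈ D W', g W' e) + ε' ≤ 1 := hgslack
          rw [← hZW] at this
          linarith
        · rw [if_neg hZW, if_pos rfl]
          have := hgdem Z hZL
          linarith
  have hsat : ∀ W, Relation.ReflTransGen step U₀ W → ∀ e ∈ D W,
      ∑ U ∈ L, f U e = x e := by
    intro W hreach e heW
    by_contra hne
    have hlt : ∑ U ∈ L, f U e < x e := lt_of_le_of_ne (hfload e) hne
    obtain ⟨ε', g, hε'0, hε'le, hgS, hgΦ, hgload, hglow, hgslack⟩ :=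
      Qlem W hreach (x e - ∑ U ∈ L, f U e) (by linarith)
    have hgS' := hgS
    rw [hS, Set.mem_setOf_eq] at hgS'
    obtain ⟨hgpos, hgsupp, hgld, hgdem⟩ := hgS'
    have hWL : W ∈ L := hreachL W hreach
    set g' : α → β → ℝ := fun U' e' => g U' e' + (if U' = W ∧ e' = e then ε' else 0)
      with hg'def
    have hg'S : g' ∈ S := by
      rw [hS, Set.mem_setOf_eq]
      refine ⟨?_, ?_, ?_, ?_⟩
      · intro U' e'
        rw [hg'def]
        simp only
        have : (0:ℝ) ≤ (if U' = W ∧ e' = e then ε' else 0) := by split_ifs <;> linarith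
        linarith [hgpos U' e']
      · intro U' e' hne'
        by_cases hc : U' = W ∧ e' = e
        · obtain ⟨rfl, rfl⟩ := hc
          exact ⟨hWL, heW⟩
        · apply hgsupp U' e'
          intro h0
          apply hne'
          rw [hg'def]
          simp only
          rw [if_neg hc, h0, zero_add]
      · intro e'
        rw [hg'def]
        simp only
        rw [Finset.sum_add_distrib]
        have h1 : ∑ U' ∈ L, (if U' = W ∧ e' = e then ε' else 0)
            = (if e' = e then ε' else 0) := by
          by_cases he' : e' = e
          · subst he'
            simp [Finset.sum_ite_eq', hWL]
          · rw [if_neg he']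
            exact Finset.sum_eq_zero fun U' _ => if_neg (fun h => he' h.2)
        rw [h1, hgload e']
        by_cases he' : e' = e
        · subst he'
          rw [if_pos rfl]
          linarith
        · rw [if_neg he']
          linarith [hfload e']
      · intro U' hU'L
        rw [hg'def]
        simp only
        rw [Finset.sum_add_distrib]
        have h1 : ∑ e' ∈ D U', (if U' = W ∧ e' = e then ε' else 0)
            = (if U' = W then ε' else 0) := by
          by_cases hUW : U' = W
          · subst hUW
            simp [Finset.sum_ite_eq', heW]
          · rw [if_neg hUW]
            exact Finset.sum_eq_zero fun e' _ => if_neg (fun h => hUW h.1)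
        rw [h1]
        by_cases hUW : U' = W
        · subst hUW
          rw [if_pos rfl]
          linarith [hgslack]
        · rw [if_neg hUW]
          linarith [hgdem U' hU'L]
    have hΦgt : Φ f < Φ g' := by
      have h2 : Φ g' = Φ g + ε' := by
        rw [hΦ]
        simp only
        have : ∀ U ∈ L, ∑ e' ∈ D U, g' U e' = (∑ e' ∈ D U, g U e')
            + (if U = W then ε' else 0) := by
          intro U _
          rw [hg'def]
          simp only
          rw [Finset.sum_add_distrib]
          congr 1
          by_cases hUW : U = W
          · subst hUW
            simp [Finset.sum_ite_eq', heW]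
          · rw [if_neg hUW]
            exact Finset.sum_eq_zero fun e' _ => if_neg (fun h => hUW h.1)
        rw [Finset.sum_congr rfl this, Finset.sum_add_distrib]
        rw [Finset.sum_ite_eq' L W (fun _ => ε'), if_pos hWL]
      rw [h2, hgΦ]
      linarith
    exact absurd (hfmax hg'S) (by simpa using not_le.mpr hΦgt)
  -- counting argument
  set R : Finset α := L.filter (fun U => Relation.ReflTransGen step U₀ U) with hR
  have hRL : R ⊆ L := Finset.filter_subset _ _
  have hU₀R : U₀ ∈ R := Finset.mem_filter.mpr ⟨hU₀L, Relation.ReflTransGen.refl⟩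
  have hhall := hall R hRL
  have hsum1 : ∑ e ∈ R.biUnion D, x e = ∑ U ∈ L, ∑ e ∈ R.biUnion D, f U e := by
    rw [← Finset.sum_comm]
    refine Finset.sum_congr rfl fun e he => ?_
    obtain ⟨W, hWR, heW⟩ := Finset.mem_biUnion.mp he
    exact (hsat W (Finset.mem_filter.mp hWR).2 e heW).symm
  have hsum2 : ∑ U ∈ L, ∑ e ∈ R.biUnion D, f U e = ∑ U ∈ R, ∑ e ∈ R.biUnion D, f U e := by
    symm
    apply Finset.sum_subset hRL
    intro U hUL hUR
    apply Finset.sum_eq_zero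
    intro e he
    by_contra hne
    have hposU : 0 < f U e := lt_of_le_of_ne (hfpos U e) (Ne.symm hne)
    obtain ⟨W, hWR, heW⟩ := Finset.mem_biUnion.mp he
    have hWreach := (Finset.mem_filter.mp hWR).2
    have heDU : e ∈ D U := (hfsupp U e hne).2
    have : Relation.ReflTransGen step U₀ U :=
      hWreach.tail ⟨hreachL W hWreach, hUL, e, heW, heDU, hposU⟩
    exact hUR (Finset.mem_filter.mpr ⟨hUL, this⟩)
  have hsum3 : ∀ U ∈ R, ∑ e ∈ R.biUnion D, f U e = ∑ e ∈ D U, f U e := by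
    intro U hUR
    symm
    apply Finset.sum_subset
    · intro e he
      exact Finset.mem_biUnion.mpr ⟨U, hUR, he⟩
    · intro e he heD
      by_contra hne
      exact heD (hfsupp U e hne).2
  have hlt : ∑ U ∈ R, ∑ e ∈ D U, f U e < (R.card : ℝ) := by
    have h1 : ∑ U ∈ R, ∑ e ∈ D U, f U e < ∑ U ∈ R, (1:ℝ) := by
      refine Finset.sum_lt_sum (fun U hUR => hfdem U (hRL hUR)) ⟨U₀, hU₀R, hdef⟩
    rw [Finset.sum_const, nsmul_eq_mul, mul_one] at h1
    exact h1
  rw [hsum1, hsum2, Finset.sum_congr rfl hsum3] at hhall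
  linarith


theorem stmt10 {V : Type*} [Fintype V] [DecidableEq V]
    (G : SimpleGraph V)
    (T : Finset V) (hTeven : Even T.card)
    (that : V) (hthat : that ∈ T)
    (x : Sym2 V → ℝ) (hx0 : ∀ e ∈ G.edgeSet, 0 ≤ x e)
    (heven : ∀ S : Finset V, S.Nonempty → S ≠ univ → Even ((S ∩ T).card) →
      2 ≤ xCut G x S)
    -- the partition inequality, satisfied by fractional spanning trees
    (hpart : ∀ P : Finset (Finset V), (∀ p ∈ P, p.Nonempty) →
      (P : Set (Finset V)).PairwiseDisjoint id → P.biUnion id = univ →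
      (P.card : ℝ) - 1 ≤ (∑ p ∈ P, xCut G x p) / 2)
    (τ : ℝ) (hτ0 : 0 ≤ τ) (hτ : τ ≤ 1 / 2) :
    -- L is the family of all T-odd τ-narrow subsets of V \ {t̂}
    let L : Finset (Finset V) := (univ : Finset (Finset V)).filter
      (fun S => S ⊆ univ.erase that ∧ Odd ((S ∩ T).card) ∧ xCut G x S < 1 + τ)
    ∃ f : Finset V → Sym2 V → ℝ,
      (∀ U ∈ L, ∀ e, 0 ≤ f U e) ∧
      (∀ e ∈ G.edgeSet, ∑ U ∈ L, f U e ≤ x e) ∧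
      (∀ U ∈ L, 1 ≤ xCut G (f U) U) := by
  intro L
  classical
  have hLdef : L = (univ : Finset (Finset V)).filter
      (fun S => S ⊆ univ.erase that ∧ Odd ((S ∩ T).card) ∧ xCut G x S < 1 + τ) := rfl
  set x' : Sym2 V → ℝ := fun e => if e ∈ G.edgeSet then x e else 0 with hx'def
  have hx' : ∀ e, 0 ≤ x' e := by
    intro e
    rw [hx'def]
    simp only
    split_ifs with h
    · exact hx0 e h
    · exact le_refl 0
  have hxx' : ∀ e ∈ G.edgeSet, x e = x' e := by
    intro e he
    rw [hx'def]
    simp [he]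
  have hcutx : ∀ S, xCut G x S = xCut G x' S := fun S => xCut_congr G x x' hxx' S
  have hLmem : ∀ S : Finset V, S ∈ L ↔
      (that ∉ S ∧ Odd ((S ∩ T).card) ∧ xCut G x' S < 1 + τ) := by
    intro S
    rw [hLdef, mem_filter]
    simp only [mem_univ, true_and]
    constructor
    · rintro ⟨hsub, ho, hn⟩
      refine ⟨fun hthatS => ?_, ho, by rwa [← hcutx]⟩
      have := hsub hthatS
      rw [mem_erase] at this
      exact this.1 rfl
    · rintro ⟨hnot, ho, hn⟩
      refine ⟨fun v hv => mem_erase.mpr ⟨fun hveq => hnot (hveq ▸ hv), mem_univ v⟩, ho,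
        by rwa [hcutx]⟩
  have heven' : ∀ S : Finset V, S.Nonempty → S ≠ univ → Even ((S ∩ T).card) →
      2 ≤ xCut G x' S := by
    intro S h1 h2 h3
    rw [← hcutx]
    exact heven S h1 h2 h3
  have hpart' : ∀ P : Finset (Finset V), (∀ p ∈ P, p.Nonempty) →
      (P : Set (Finset V)).PairwiseDisjoint id → P.biUnion id = univ →
      (P.card : ℝ) - 1 ≤ (∑ p ∈ P, xCut G x' p) / 2 := by
    intro P h1 h2 h3
    have := hpart P h1 h2 h3
    rwa [Finset.sum_congr rfl (fun p _ => hcutx p)] at this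
  have hlam : ∀ U ∈ L, ∀ W ∈ L, U ∩ W = ∅ ∨ U ⊆ W ∨ W ⊆ U := by
    intro U hU W hW
    rw [hLmem] at hU hW
    exact laminar_of_narrow G T that x' hx' heven' τ hτ hU.1 hW.1 hU.2.1 hW.2.1
      hU.2.2 hW.2.2
  have hhall : ∀ L' ⊆ L, ((L'.card : ℝ)) ≤ ∑ e ∈ L'.biUnion (Dcut G), x' e := by
    intro L' hL'sub
    refine hall_cond G T that x' hx' hpart' τ hτ0 hτ L' ?_ ?_
    · intro S hS
      exact (hLmem S).mp (hL'sub hS)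
    · intro U hU W hW
      exact hlam U (hL'sub hU) W (hL'sub hW)
  obtain ⟨f, hf1, hf2, hf3⟩ := frac_hall L (Dcut G) x' hx' hhall
  refine ⟨f, fun U _ e => hf1 U e, ?_, ?_⟩
  · intro e he
    calc ∑ U ∈ L, f U e ≤ x' e := hf2 e
      _ = x e := (hxx' e he).symm
  · intro U hU
    rw [xCut_eq_sum_Dcut]
    exact hf3 U hU
end
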